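/- Let n ≥ 3, let c ∈ S_n be the n-cycle x ↦ x+1 on ℤ/nℤ, and let τ ∈ N_{S_n}(⟨c⟩) have cycle type (m^k, 1, 1) for some integers m ≥ 2 and k. Then for any integer j, the cycle type of c^j τ is: (m^k, 1, 1) if j is even; (ℓ^{n/ℓ}) for some divisor ℓ of n, if j is odd and m = 2; (m^k, 2) if j is odd and m > 2 is even; and ((2m)^{k/2}, 2) if j is odd and m is odd. In particular, if H ≤ S_n is such that (τ, H) is C-admissible, then for odd j no conjugate of c^j τ lies in H. -/

import Mathlib

/-- The `n`-cycle `x ↦ x + 1` on `ℤ/nℤ`, as a permutation. -/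
def cyc (n : ℕ) : Equiv.Perm (ZMod n) := Equiv.addLeft (1 : ZMod n)

/-- A subgroup `H` of the symmetric group avoids a cycle type `μ` if it contains no element
of cycle type `μ` (Mathlib's `cycleType` records only the cycle lengths `≥ 2`). -/
def Avoids {n : ℕ} [NeZero n] (H : Subgroup (Equiv.Perm (ZMod n))) (μ : Multiset ℕ) : Prop :=
  ∀ h ∈ H, Equiv.Perm.cycleType h ≠ μ

/-- The pair `(τ', H)` is `C`-admissible: `τ' ∈ N_{S_n}(C)` has cycle type
`(m^{(n−1)/m}, 1)` or `(m^{(n−2)/m}, 1, 1)` with `k = ⌊(n−1)/m⌋` the number of `m`-cycles,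
and `H` avoids the cycle types `(ℓ^{n/ℓ})` for every divisor `ℓ > 1` of `n`, `(m^k, 2)`,
and `((2m)^{k/2}, 2)` when `m` is odd. -/
def CAdmissible (n : ℕ) [NeZero n] (τ' : Equiv.Perm (ZMod n)) (H : Subgroup (Equiv.Perm (ZMod n)))
    (m k : ℕ) : Prop :=
  τ' ∈ Subgroup.normalizer (Subgroup.zpowers (cyc n) : Set (Equiv.Perm (ZMod n))) ∧
  2 ≤ m ∧ k = (n - 1) / m ∧
  τ'.cycleType = Multiset.replicate k m ∧ (m * k = n - 1 ∨ m * k = n - 2) ∧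
  (∀ ℓ : ℕ, ℓ ∣ n → 1 < ℓ → Avoids H (Multiset.replicate (n / ℓ) ℓ)) ∧
  Avoids H (2 ::ₘ Multiset.replicate k m) ∧
  (Odd m → Avoids H (2 ::ₘ Multiset.replicate (k / 2) (2 * m)))

section Aux
open Equiv Equiv.Perm Multiset

section PermTools
variable {α : Type*} [Fintype α] [DecidableEq α]

lemma period_bridge (σ : Equiv.Perm α) (x : α) (hx : σ x ≠ x) (t : ℕ) :
    (σ ^ t) x = x ↔ (σ.cycleOf x).support.card ∣ t := by
  have hc : (σ.cycleOf x).IsCycle := σ.isCycle_cycleOf hx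
  have ho : orderOf (σ.cycleOf x) = (σ.cycleOf x).support.card := hc.orderOf
  have hxx : (σ.cycleOf x) x ≠ x := by rw [σ.cycleOf_apply_self]; exact hx
  constructor
  · intro h
    have h1 : (σ.cycleOf x) ^ t = 1 :=
      hc.pow_eq_one_iff.2 ⟨x, hxx, by rw [σ.cycleOf_pow_apply_self]; exact h⟩
    rw [← ho]; exact orderOf_dvd_of_pow_eq_one h1
  · intro h
    have h1 : (σ.cycleOf x) ^ t = 1 := by
      rw [← ho] at h; exact orderOf_dvd_iff_pow_eq_one.1 h
    have h2 : ((σ.cycleOf x) ^ t) x = x := by rw [h1]; rfl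
    rw [σ.cycleOf_pow_apply_self] at h2
    exact h2

lemma card_cycleOf_of_period (σ : Equiv.Perm α) (x : α) (hx : σ x ≠ x) (L : ℕ)
    (h : ∀ t, (σ ^ t) x = x ↔ L ∣ t) : (σ.cycleOf x).support.card = L :=
  Nat.dvd_antisymm ((period_bridge σ x hx L).1 ((h L).2 dvd_rfl))
    ((h _).1 ((period_bridge σ x hx _).2 dvd_rfl))

lemma cycleType_uniform (σ : Equiv.Perm α) (L : ℕ) (hL : 2 ≤ L)
    (h : ∀ x t, ((σ ^ t) x = x ↔ L ∣ t)) :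
    L ∣ Fintype.card α ∧ σ.cycleType = Multiset.replicate (Fintype.card α / L) L := by
  have hfix : ∀ x : α, σ x ≠ x := by
    intro x hx
    have := (h x 1).1 (by simpa using hx)
    have := Nat.le_of_dvd one_pos this; omega
  have hsupp : σ.support = Finset.univ :=
    Finset.eq_univ_iff_forall.2 fun x => mem_support.2 (hfix x)
  have hcard : ∀ f ∈ σ.cycleFactorsFinset, f.support.card = L := by
    intro f hf
    obtain ⟨x, hx⟩ := (mem_cycleFactorsFinset_iff.1 hf).1.nonempty_support
    rw [cycle_is_cycleOf hx hf]
    exact card_cycleOf_of_period σ x (hfix x) L (h x)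
  have htype : σ.cycleType = Multiset.replicate σ.cycleFactorsFinset.card L := by
    rw [cycleType_def]
    refine Multiset.eq_replicate.2 ⟨by simp, ?_⟩
    intro b hb
    obtain ⟨f, hf, rfl⟩ := Multiset.mem_map.1 hb
    exact hcard f hf
  have hsum : σ.cycleType.sum = Fintype.card α := by
    rw [sum_cycleType, hsupp, Finset.card_univ]
  rw [htype, Multiset.sum_replicate, smul_eq_mul] at hsum
  have hdvd : L ∣ Fintype.card α := ⟨σ.cycleFactorsFinset.card, by rw [← hsum]; ring⟩
  refine ⟨hdvd, ?_⟩
  rw [htype]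
  congr 1
  have hL0 : 0 < L := by omega
  rw [← hsum, Nat.mul_div_cancel _ hL0]

omit [Fintype α] [DecidableEq α] in
lemma pow_fix (σ : Equiv.Perm α) (y : α) (hy : σ y = y) (s : ℕ) : (σ ^ s) y = y := by
  induction s with
  | zero => rfl
  | succ s ih => rw [pow_succ', Perm.mul_apply, ih, hy]

lemma two_period (σ : Equiv.Perm α) (p : α) (hp : σ p ≠ p) (h2 : (σ ^ 2) p = p) (t : ℕ) :
    (σ ^ t) p = p ↔ 2 ∣ t := by
  constructor
  · intro h
    by_contra hodd
    obtain ⟨u, hu⟩ : ∃ u, t = 2 * u + 1 := ⟨t / 2, by omega⟩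
    rw [hu, pow_succ, Perm.mul_apply, ← Perm.mul_apply, ← pow_succ, pow_succ',
      Perm.mul_apply, pow_mul, pow_fix (σ ^ 2) p h2 u] at h
    exact hp h
  · rintro ⟨u, rfl⟩
    rw [pow_mul]
    exact pow_fix (σ ^ 2) p h2 u

lemma cycleType_two_uniform (σ : Equiv.Perm α) (L : ℕ) (hL : 2 < L) (p : α)
    (hp : σ p ≠ p) (hq : σ (σ p) = p)
    (h : ∀ x, x ≠ p → x ≠ σ p → ∀ t, ((σ ^ t) x = x ↔ L ∣ t)) :
    L ∣ Fintype.card α - 2 ∧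
      σ.cycleType = 2 ::ₘ Multiset.replicate ((Fintype.card α - 2) / L) L := by
  classical
  set q := σ p with hqdef
  have hq2 : (σ ^ 2) p = p := by rw [pow_two, Perm.mul_apply]; exact hq
  have hfix : ∀ x : α, σ x ≠ x := by
    intro x hx
    rcases eq_or_ne x p with rfl | hxp
    · exact hp hx
    rcases eq_or_ne x q with rfl | hxq
    · rw [hqdef] at hx; exact hp (σ.injective hx)
    have := (h x hxp hxq 1).1 (by simpa using hx)
    have := Nat.le_of_dvd one_pos this; omega
  have hsupp : σ.support = Finset.univ :=
    Finset.eq_univ_iff_forall.2 fun x => mem_support.2 (hfix x)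
  set f0 := σ.cycleOf p with hf0
  have hf0card : f0.support.card = 2 :=
    card_cycleOf_of_period σ p hp 2 (two_period σ p hp hq2)
  have hf0mem : f0 ∈ σ.cycleFactorsFinset :=
    cycleOf_mem_cycleFactorsFinset_iff.2 (mem_support.2 hp)
  have hcard : ∀ f ∈ σ.cycleFactorsFinset, f ≠ f0 → f.support.card = L := by
    intro f hf hne
    obtain ⟨x, hx⟩ := (mem_cycleFactorsFinset_iff.1 hf).1.nonempty_support
    have hfeq : f = σ.cycleOf x := cycle_is_cycleOf hx hf
    have hxp : x ≠ p := by rintro rfl; exact hne (by rw [hfeq])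
    have hxq : x ≠ q := by
      rintro rfl
      exact hne (by rw [hfeq, hqdef, cycleOf_self_apply])
    rw [hfeq]
    exact card_cycleOf_of_period σ x (hfix x) L (h x hxp hxq)
  have hmem : f0 ∈ σ.cycleFactorsFinset.val := hf0mem
  have hsplit : σ.cycleFactorsFinset.val = f0 ::ₘ σ.cycleFactorsFinset.val.erase f0 :=
    (Multiset.cons_erase hmem).symm
  have htype : σ.cycleType
      = 2 ::ₘ (σ.cycleFactorsFinset.val.erase f0).map (Finset.card ∘ Equiv.Perm.support) := by
    rw [cycleType_def, hsplit, Multiset.map_cons]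
    simp [hf0card]
  have herase : (σ.cycleFactorsFinset.val.erase f0).map (Finset.card ∘ Equiv.Perm.support)
      = Multiset.replicate (σ.cycleFactorsFinset.val.erase f0).card L := by
    refine Multiset.eq_replicate.2 ⟨by simp, ?_⟩
    intro b hb
    obtain ⟨f, hf, rfl⟩ := Multiset.mem_map.1 hb
    have hfne : f ≠ f0 := ((σ.cycleFactorsFinset.nodup.mem_erase_iff).mp hf).1
    exact hcard f (Multiset.mem_of_mem_erase hf) hfne
  have hsum : σ.cycleType.sum = Fintype.card α := by
    rw [sum_cycleType, hsupp, Finset.card_univ]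
  rw [htype, herase] at hsum
  rw [Multiset.sum_cons, Multiset.sum_replicate, smul_eq_mul] at hsum
  set c := (σ.cycleFactorsFinset.val.erase f0).card with hc
  have hdvd : L ∣ Fintype.card α - 2 := ⟨c, by rw [mul_comm]; omega⟩
  refine ⟨hdvd, ?_⟩
  rw [htype, herase]
  congr 2
  have hL0 : 0 < L := by omega
  have hceq : Fintype.card α - 2 = c * L := by omega
  rw [hceq, Nat.mul_div_cancel _ hL0]

end PermTools

/-- The affine permutation `x ↦ a x + b` of `ZMod n`. -/
def aff {n : ℕ} (a : (ZMod n)ˣ) (b : ZMod n) : Equiv.Perm (ZMod n) where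
  toFun x := (a : ZMod n) * x + b
  invFun x := ((a⁻¹ : (ZMod n)ˣ) : ZMod n) * (x - b)
  left_inv x := by
    simp only [add_sub_cancel_right, ← mul_assoc, ← Units.val_mul, inv_mul_cancel,
      Units.val_one, one_mul]
  right_inv x := by
    simp only [← mul_assoc, ← Units.val_mul, mul_inv_cancel, Units.val_one, one_mul,
      sub_add_cancel]

lemma aff_apply {n : ℕ} (a : (ZMod n)ˣ) (b x : ZMod n) :
    aff a b x = (a : ZMod n) * x + b := rfl

/-- geometric sums `1 + a + ... + a^{t-1}`. -/
noncomputable def gs {n : ℕ} (a : (ZMod n)ˣ) (t : ℕ) : ZMod n :=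
  ∑ i ∈ Finset.range t, (a : ZMod n) ^ i

lemma gs_succ {n : ℕ} (a : (ZMod n)ˣ) (t : ℕ) :
    gs a (t + 1) = gs a t + (a : ZMod n) ^ t := Finset.sum_range_succ _ _

lemma gs_mul {n : ℕ} (a : (ZMod n)ˣ) (t : ℕ) :
    gs a t * ((a : ZMod n) - 1) = (a : ZMod n) ^ t - 1 := geom_sum_mul _ _

lemma aff_pow_apply {n : ℕ} (a : (ZMod n)ˣ) (b : ZMod n) (t : ℕ) (x : ZMod n) :
    (aff a b ^ t) x = (a : ZMod n) ^ t * x + gs a t * b := by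
  induction t generalizing x with
  | zero => simp [gs]
  | succ t ih =>
    rw [pow_succ, Perm.mul_apply, aff_apply, ih, gs_succ]
    ring

lemma cyc_zpow_apply {n : ℕ} (j : ℤ) (x : ZMod n) :
    (cyc n ^ j) x = x + (j : ZMod n) := by
  show ((Equiv.addLeft (1 : ZMod n)) ^ j) x = _
  rw [Equiv.zsmul_addLeft]
  simp [add_comm]

lemma affine_of_normalizer {n : ℕ} [NeZero n] (τ : Equiv.Perm (ZMod n))
    (hτ : τ ∈ Subgroup.normalizer (Subgroup.zpowers (cyc n) : Set (Equiv.Perm (ZMod n)))) :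
    ∃ a : (ZMod n)ˣ, τ = aff a (τ 0) := by
  rw [Subgroup.mem_normalizer_iff] at hτ
  have h1 : τ * cyc n * τ⁻¹ ∈ Subgroup.zpowers (cyc n) :=
    (hτ (cyc n)).1 (Subgroup.mem_zpowers _)
  obtain ⟨s, hs⟩ := Subgroup.mem_zpowers_iff.1 h1
  set a : ZMod n := (s : ZMod n) with ha
  have key : ∀ y : ZMod n, τ (y + 1) = τ y + a := by
    intro y
    have h0 := DFunLike.congr_fun hs (τ y)
    rw [cyc_zpow_apply] at h0
    have h2 : (τ * cyc n * τ⁻¹) (τ y) = τ (1 + y) := by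
      simp only [Perm.mul_apply, Equiv.Perm.inv_def, Equiv.symm_apply_apply]
      rfl
    rw [h2] at h0
    rw [add_comm y 1, ← h0]
  have hfor : ∀ t : ℕ, τ ((t : ZMod n)) = a * (t : ZMod n) + τ 0 := by
    intro t
    induction t with
    | zero => simp
    | succ t ih =>
      push_cast
      rw [key, ih]
      ring
  have hall : ∀ x : ZMod n, τ x = a * x + τ 0 := by
    intro x
    have hx : ((x.val : ℕ) : ZMod n) = x := by
      rw [ZMod.natCast_val, ZMod.cast_id]
    rw [← hx, hfor]
  obtain ⟨x, hx⟩ := τ.surjective (1 + τ 0)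
  have hux : a * x = 1 := by
    have h3 := hall x
    rw [hx] at h3
    exact add_right_cancel h3.symm
  have hu : IsUnit a := IsUnit.of_mul_eq_one x hux
  refine ⟨hu.unit, ?_⟩
  ext y
  rw [hall y, aff_apply, IsUnit.unit_spec]


end Aux

open Equiv Equiv.Perm Multiset in
/-- Cycle types of `c^j τ` for `τ ∈ N_{S_n}(C)` of cycle type `(m^k, 1, 1)`: if `j` is even
the cycle type is again `(m^k, 1, 1)`; if `j` is odd it is `(ℓ^{n/ℓ})` for some divisor `ℓ`
of `n` when `m = 2`, it is `(m^k, 2)` when `m > 2` is even, and it is `((2m)^{k/2}, 2)`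
when `m` is odd. In particular if `(τ, H)` is `C`-admissible then for odd `j` no conjugate
of `c^j τ` lies in `H`. -/
theorem cycleType_zpow_cyc_mul
    (n : ℕ) (hn : 3 ≤ n) [NeZero n] (τ : Equiv.Perm (ZMod n))
    (hτ : τ ∈ Subgroup.normalizer (Subgroup.zpowers (cyc n) : Set (Equiv.Perm (ZMod n))))
    (m k : ℕ) (hm : 2 ≤ m)
    (hcyc : τ.cycleType = Multiset.replicate k m) (hmk : m * k = n - 2) (j : ℤ) :
    (Even j → (cyc n ^ j * τ).cycleType = Multiset.replicate k m) ∧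
    (Odd j → m = 2 → ∃ ℓ : ℕ, ℓ ∣ n ∧
      (cyc n ^ j * τ).cycleType =
        Multiset.filter (fun c => 2 ≤ c) (Multiset.replicate (n / ℓ) ℓ)) ∧
    (Odd j → 2 < m → Even m →
      (cyc n ^ j * τ).cycleType = 2 ::ₘ Multiset.replicate k m) ∧
    (Odd j → Odd m →
      (cyc n ^ j * τ).cycleType = 2 ::ₘ Multiset.replicate (k / 2) (2 * m)) ∧
    (∀ H : Subgroup (Equiv.Perm (ZMod n)), CAdmissible n τ H m k →
      Odd j → ∀ h ∈ H, ¬ IsConj (cyc n ^ j * τ) h) := by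
  classical
  obtain ⟨u, hτeq⟩ := affine_of_normalizer τ hτ
  set b : ZMod n := τ 0 with hb
  have hn0 : n ≠ 0 := NeZero.ne n
  have hcardn : Fintype.card (ZMod n) = n := ZMod.card n
  have hπ : ∀ i : ℤ, cyc n ^ i * τ = aff u (b + (i : ZMod n)) := by
    intro i; ext x
    rw [Perm.mul_apply, cyc_zpow_apply, hτeq, aff_apply, aff_apply]
    ring
  have hkm : k * m = n - 2 := by rw [mul_comm]; exact hmk
  -- fixed point of τ
  have hsuppτ : τ.support.card = n - 2 := by
    rw [← sum_cycleType, hcyc, Multiset.sum_replicate, smul_eq_mul]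
    omega
  have hτcompl : (τ.supportᶜ : Finset (ZMod n)).card = 2 := by
    rw [Finset.card_compl, hcardn, hsuppτ]
    omega
  obtain ⟨x0, hx0⟩ := Finset.card_pos.1 (by omega : 0 < (τ.supportᶜ : Finset (ZMod n)).card)
  have hx0fix : τ x0 = x0 := notMem_support.1 (Finset.mem_compl.1 hx0)
  have hbeq : (u : ZMod n) * x0 + b = x0 := by
    rw [← aff_apply, ← hτeq]; exact hx0fix
  -- σ0 := x ↦ u x, conjugate to τ
  set σ0 : Equiv.Perm (ZMod n) := aff u 0 with hσ0
  have hconj : τ = (Equiv.addLeft x0) * σ0 * (Equiv.addLeft x0)⁻¹ := by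
    ext x
    simp only [Perm.mul_apply, Equiv.neg_addLeft, Equiv.coe_addLeft, hσ0, aff_apply, hτeq]
    linear_combination hbeq
  have hcyc0 : σ0.cycleType = Multiset.replicate k m := by
    rw [hconj, cycleType_conj] at hcyc
    exact hcyc
  have hσ0z : ∀ z : ZMod n, σ0 z = z ↔ ((u : ZMod n) - 1) * z = 0 := by
    intro z
    rw [hσ0, aff_apply]
    constructor <;> intro h <;> linear_combination h
  -- the kernel of multiplication by u - 1 is {0, e}
  have hsupp0 : σ0.support.card = n - 2 := by
    rw [← sum_cycleType, hcyc0, Multiset.sum_replicate, smul_eq_mul]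
    omega
  have hcompl : (σ0.supportᶜ : Finset (ZMod n)).card = 2 := by
    rw [Finset.card_compl, hcardn, hsupp0]
    omega
  obtain ⟨y1, y2, hy12, hyeq⟩ := Finset.card_eq_two.1 hcompl
  have h0mem : (0 : ZMod n) ∈ σ0.supportᶜ := by
    rw [Finset.mem_compl, notMem_support, hσ0, aff_apply]
    ring
  obtain ⟨e, he0, hFeq⟩ : ∃ e : ZMod n, e ≠ 0 ∧ (σ0.supportᶜ : Finset (ZMod n)) = {0, e} := by
    rw [hyeq] at h0mem
    rcases Finset.mem_insert.1 h0mem with h | h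
    · exact ⟨y2, by rw [← h] at hy12; exact fun hh => hy12 hh.symm, by rw [hyeq, ← h]⟩
    · rw [Finset.mem_singleton] at h
      refine ⟨y1, by rw [← h] at hy12; exact fun hh => hy12 hh, ?_⟩
      rw [hyeq, ← h, Finset.pair_comm]
  have hker : ∀ z : ZMod n, ((u : ZMod n) - 1) * z = 0 ↔ (z = 0 ∨ z = e) := by
    intro z
    have : z ∈ σ0.supportᶜ ↔ (z = 0 ∨ z = e) := by
      rw [hFeq, Finset.mem_insert, Finset.mem_singleton]
    rw [← this, Finset.mem_compl, notMem_support, hσ0z]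
  have hkere : ((u : ZMod n) - 1) * e = 0 := (hker e).2 (Or.inr rfl)
  have he2 : e + e = 0 := by
    have h1 : ((u : ZMod n) - 1) * (e + e) = 0 := by linear_combination 2 * hkere
    rcases (hker _).1 h1 with h | h
    · exact h
    · exact absurd (by linear_combination h) he0
  -- n is even, parity homomorphism
  haveI : Fact (Nat.Prime 2) := ⟨Nat.prime_two⟩
  have horde : addOrderOf e = 2 := by
    apply addOrderOf_eq_prime
    · rw [two_nsmul]; exact he2
    · exact he0
  have h2n : 2 ∣ n := by
    have hd := addOrderOf_dvd_card (x := e)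
    rw [hcardn, horde] at hd
    exact hd
  set φ : ZMod n →+* ZMod 2 := ZMod.castHom h2n (ZMod 2) with hφ
  have hφval : ∀ v : ZMod n, φ v = ((v.val : ℕ) : ZMod 2) := by
    intro v
    rw [hφ, ZMod.castHom_apply, ZMod.natCast_val]
  have hZ2 : ∀ x : ZMod 2, x = 0 ∨ x = 1 := by
    intro x
    fin_cases x
    · exact Or.inl rfl
    · exact Or.inr rfl
  have heven : ∀ v : ZMod n, φ v = 0 ↔ ∃ w, v = 2 * w := by
    intro v
    constructor
    · intro h
      rw [hφval] at h
      have h2 : (2 : ℕ) ∣ v.val := (ZMod.natCast_eq_zero_iff _ 2).1 h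
      obtain ⟨c, hc⟩ := h2
      refine ⟨(c : ZMod n), ?_⟩
      have : ((v.val : ℕ) : ZMod n) = v := by rw [ZMod.natCast_val, ZMod.cast_id]
      rw [← this, hc]
      push_cast
      ring
    · rintro ⟨w, rfl⟩
      rw [_root_.map_mul]
      have hφ2 : φ (2 : ZMod n) = 0 := by
        have h21 : (2 : ZMod n) = 1 + 1 := by norm_num
        rw [h21, _root_.map_add, _root_.map_one]
        rfl
      rw [hφ2, zero_mul]
  have hφu : φ (u : ZMod n) = 1 := by
    rcases hZ2 (φ (u : ZMod n)) with h | h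
    · exfalso
      have : IsUnit (φ (u : ZMod n)) := (u.isUnit).map φ
      rw [h] at this
      exact this.ne_zero rfl
    · exact h
  have hφb : φ b = 0 := by
    have := congrArg φ hbeq
    rw [_root_.map_add, _root_.map_mul, hφu, one_mul] at this
    linear_combination this
  -- period facts for σ0
  have hσ0pow : ∀ (t : ℕ) (z : ZMod n), (σ0 ^ t) z = (u : ZMod n) ^ t * z := by
    intro t z
    rw [hσ0, aff_pow_apply, mul_zero, add_zero]
  have hper : ∀ z : ZMod n, z ≠ 0 → z ≠ e → ∀ t, ((u : ZMod n) ^ t * z = z ↔ m ∣ t) := by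
    intro z hz0 hze t
    have hzsupp : σ0 z ≠ z := by
      rw [Ne, hσ0z z, hker z]
      tauto
    have hcardz : (σ0.cycleOf z).support.card = m := by
      have hmem : (σ0.cycleOf z).support.card ∈ σ0.cycleType := by
        rw [cycleType_def]
        exact Multiset.mem_map_of_mem _ (cycleOf_mem_cycleFactorsFinset_iff.2 (mem_support.2 hzsupp))
      rw [hcyc0] at hmem
      exact Multiset.eq_of_mem_replicate hmem
    rw [← hσ0pow, period_bridge σ0 z hzsupp t, hcardz]
  have h1ne0 : (1 : ZMod n) ≠ 0 := by
    intro h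
    have : ((1:ℕ) : ZMod n) = 0 := by push_cast; exact h
    rw [ZMod.natCast_eq_zero_iff] at this
    have := Nat.le_of_dvd one_pos this
    omega
  have h1nee : (1 : ZMod n) ≠ e := by
    intro h
    have h2 : ((2:ℕ) : ZMod n) = 0 := by push_cast; linear_combination he2 + 2 * h
    rw [ZMod.natCast_eq_zero_iff] at h2
    have := Nat.le_of_dvd two_pos h2
    omega
  have hum : ∀ t, ((u : ZMod n) ^ t = 1 ↔ m ∣ t) := by
    intro t
    have := hper 1 h1ne0 h1nee t
    rw [mul_one] at this
    exact this
  have hkert : ∀ t, ¬ (m ∣ t) → ∀ z : ZMod n, ((u : ZMod n) ^ t - 1) * z = 0 →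
      z = 0 ∨ z = e := by
    intro t ht z hz
    by_contra hcon
    push_neg at hcon
    have h1 : (u : ZMod n) ^ t * z = z := by linear_combination hz
    exact ht ((hper z hcon.1 hcon.2 t).1 h1)
  -- Bezout: solve (u - 1) * A = 2
  have hA : ∃ A : ZMod n, ((u : ZMod n) - 1) * A = 2 := by
    set d : ZMod n := (u : ZMod n) - 1 with hd
    have hnpos : 0 < n := by omega
    set g : ℕ := Nat.gcd d.val n with hg
    have hgpos : 0 < g := Nat.gcd_pos_of_pos_right _ hnpos
    obtain ⟨s, hs⟩ : g ∣ d.val := Nat.gcd_dvd_left _ _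
    obtain ⟨r, hr⟩ : g ∣ n := Nat.gcd_dvd_right _ _
    have hrpos : 0 < r := by
      rcases Nat.eq_zero_or_pos r with h | h
      · exfalso; rw [h, mul_zero] at hr; omega
      · exact h
    have hng : n / g = r := by rw [hr, Nat.mul_div_cancel_left _ hgpos]
    have hdval : ((d.val : ℕ) : ZMod n) = d := by rw [ZMod.natCast_val, ZMod.cast_id]
    have hBez : (g : ZMod n) = d * ((Nat.gcdA d.val n : ℤ) : ZMod n) := by
      have hb2 := Nat.gcd_eq_gcd_ab d.val n
      have hb3 : ((Nat.gcd d.val n : ℤ) : ZMod n)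
          = (((d.val : ℤ) * Nat.gcdA d.val n + (n : ℤ) * Nat.gcdB d.val n : ℤ) : ZMod n) := by
        rw [← hb2]
      push_cast at hb3
      rw [hdval, ZMod.natCast_self, zero_mul, add_zero] at hb3
      exact hb3
    have hdz0 : d * ((r : ℕ) : ZMod n) = 0 := by
      rw [← hdval, ← Nat.cast_mul, ZMod.natCast_eq_zero_iff]
      exact ⟨s, by rw [hs, hr]; ring⟩
    rcases (hker _).1 hdz0 with h | h
    · exfalso
      have hnr : n ∣ r := (ZMod.natCast_eq_zero_iff _ n).1 h
      have hrn : r ∣ n := ⟨g, by rw [hr]; ring⟩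
      have hreq : r = n := Nat.dvd_antisymm hrn hnr
      have hg1 : g = 1 := by
        have : g * n = 1 * n := by rw [← hreq]; omega
        exact Nat.eq_of_mul_eq_mul_right hnpos this
      have hBez1 : d * ((Nat.gcdA d.val n : ℤ) : ZMod n) = 1 := by
        rw [← hBez, hg1, Nat.cast_one]
      exact he0 (by linear_combination ((Nat.gcdA d.val n : ℤ) : ZMod n) * hkere
        - e * hBez1)
    · have horder2 : addOrderOf ((r : ℕ) : ZMod n) = 2 := by rw [h]; exact horde
      rw [ZMod.addOrderOf_coe _ hn0] at horder2
      have hgcdr : Nat.gcd n r = r := Nat.gcd_eq_right ⟨g, by rw [hr]; ring⟩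
      rw [hgcdr] at horder2
      have hnr : n / r = g := by rw [hr, Nat.mul_div_cancel _ hrpos]
      rw [hnr] at horder2
      refine ⟨((Nat.gcdA d.val n : ℤ) : ZMod n), ?_⟩
      rw [← hBez, horder2]
      push_cast
      ring
  have hsolve : ∀ w : ZMod n, ∃ z : ZMod n, ((u : ZMod n) - 1) * z = 2 * w := by
    obtain ⟨A, hA⟩ := hA
    intro w
    exact ⟨A * w, by rw [← mul_assoc, hA]⟩
  -- Part 1 : even j
  have part1 : Even j → (cyc n ^ j * τ).cycleType = Multiset.replicate k m := by
    rintro ⟨i, rfl⟩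
    obtain ⟨z, hz⟩ := hsolve ((i : ZMod n))
    have hconj2 : (Equiv.addLeft z) * (cyc n ^ (i + i) * τ) * (Equiv.addLeft z)⁻¹ = τ := by
      ext x
      rw [hπ (i + i)]
      simp only [Perm.mul_apply, Equiv.neg_addLeft, Equiv.coe_addLeft, aff_apply, hτeq]
      push_cast
      linear_combination -hz
    have hct := cycleType_conj (σ := cyc n ^ (i + i) * τ) (τ := Equiv.addLeft z)
    rw [hconj2] at hct
    rw [← hct, hcyc]
    -- odd j machinery
  have hφint : ∀ i : ℤ, φ ((i : ZMod n)) = ((i : ZMod 2)) := fun i => map_intCast φ i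
  have h20 : (2 : ZMod 2) = 0 := rfl
  have hφgs : ∀ t : ℕ, φ (gs u t) = ((t : ℕ) : ZMod 2) := by
    intro t
    induction t with
    | zero => simp [gs]
    | succ t ih =>
      rw [gs_succ, _root_.map_add, map_pow, hφu, one_pow, ih]
      push_cast
      ring
  have hoddstuff : Odd j →
      ((m = 2 → ∃ ℓ : ℕ, 2 ≤ ℓ ∧ ℓ ∣ n ∧
        (cyc n ^ j * τ).cycleType = Multiset.replicate (n / ℓ) ℓ) ∧
      (2 < m → Even m →
        (cyc n ^ j * τ).cycleType = 2 ::ₘ Multiset.replicate k m) ∧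
      (Odd m →
        (cyc n ^ j * τ).cycleType = 2 ::ₘ Multiset.replicate (k / 2) (2 * m))) := by
    intro hj
    set B : ZMod n := b + (j : ZMod n) with hB
    have hπj : cyc n ^ j * τ = aff u B := hπ j
    have hφB : φ B = 1 := by
      rw [hB, _root_.map_add, hφb, hφint j]
      obtain ⟨i, rfl⟩ := hj
      push_cast
      rw [h20]
      ring
    have hoddfix : ∀ t : ℕ, ¬ (2 ∣ t) → ∀ x : ZMod n, (aff u B ^ t) x ≠ x := by
      intro t ht x hx
      rw [aff_pow_apply] at hx
      have hφx := congrArg φ hx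
      rw [_root_.map_add, _root_.map_mul, _root_.map_mul, map_pow, hφu, one_pow, one_mul,
        hφgs, hφB, mul_one] at hφx
      have htmod : ((t : ℕ) : ZMod 2) = 1 := by
        obtain ⟨s, hs⟩ : ∃ s, t = 2 * s + 1 := ⟨t / 2, by omega⟩
        rw [hs]
        push_cast
        rw [h20]
        ring
      rw [htmod] at hφx
      exact (one_ne_zero : (1 : ZMod 2) ≠ 0) (by linear_combination hφx)
    constructor
    · -- m = 2
      intro hm2
      have hu2 : (u : ZMod n) ^ 2 = 1 := (hum 2).2 (by rw [hm2])
      set w : ZMod n := (1 + (u : ZMod n)) * B with hw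
      have hgs2 : ∀ t : ℕ, gs u (2 * t) = (t : ZMod n) * (1 + (u : ZMod n)) := by
        intro t
        induction t with
        | zero => simp [gs]
        | succ t ih =>
          rw [show 2 * (t + 1) = 2 * t + 1 + 1 by ring, gs_succ, gs_succ, ih,
            pow_succ, pow_mul, hu2, one_pow]
          push_cast
          ring
      set r := addOrderOf w with hr
      have hrpos : 0 < r := addOrderOf_pos w
      have hperall : ∀ (x : ZMod n) (t : ℕ), ((aff u B ^ t) x = x ↔ 2 * r ∣ t) := by
        intro x t
        rcases Nat.even_or_odd t with ⟨t1, ht1⟩ | hto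
        · have ht1' : t = 2 * t1 := by omega
          subst ht1'
          rw [aff_pow_apply, pow_mul, hu2, one_pow, one_mul, hgs2]
          have hiff1 : x + (t1 : ZMod n) * (1 + (u : ZMod n)) * B = x ↔ t1 • w = 0 := by
            rw [nsmul_eq_mul, hw]
            constructor <;> intro hh <;> linear_combination hh
          rw [hiff1, ← addOrderOf_dvd_iff_nsmul_eq_zero, ← hr]
          constructor
          · intro hh
            exact mul_dvd_mul_left 2 hh
          · intro hh
            have := (mul_dvd_mul_iff_left (a := 2) (by omega)).1 hh
            exact this
        · constructor
          · intro hh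
            exact absurd hh (hoddfix t (by rcases hto with ⟨s, hs⟩; omega) x)
          · intro hh
            exfalso
            have h2t : 2 ∣ t := dvd_trans ⟨r, rfl⟩ hh
            rcases hto with ⟨s, hs⟩
            omega
      obtain ⟨hdvd, htype⟩ := cycleType_uniform (aff u B) (2 * r) (by omega) hperall
      rw [hcardn] at hdvd htype
      exact ⟨2 * r, by omega, hdvd, by rw [hπj, htype]⟩
    -- m ≥ 3 material
    have hm3 : 2 < m → 3 ≤ m := by omega
    have hnd2 : 3 ≤ m → ¬ (m ∣ 2) := fun h3 hd => by have := Nat.le_of_dvd two_pos hd; omega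
    have hφe : 3 ≤ m → φ e = 1 := by
      intro h3
      rcases hZ2 (φ e) with h | h
      · exfalso
        obtain ⟨f, hf⟩ := (heven e).1 h
        obtain ⟨gg, hgg⟩ := (heven ((u : ZMod n) + 1)).1
          (by rw [_root_.map_add, hφu, _root_.map_one]; rfl)
        have hfk : ((u : ZMod n) ^ 2 - 1) * f = 0 := by
          linear_combination ((u : ZMod n) - 1) * f * hgg - gg * ((u : ZMod n) - 1) * hf
            + gg * hkere
        rcases hkert 2 (hnd2 h3) f hfk with h0 | h0
        · rw [h0, mul_zero] at hf
          exact he0 hf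
        · rw [h0] at hf
          exact he0 (by linear_combination -hf)
      · exact h
    have hmain : 3 ≤ m → ∀ L : ℕ, 2 < L →
        ((Even m → L = m) → True) → -- dummy
        True := fun _ _ _ _ => trivial
    constructor
    · -- m even, 2 < m
      intro hlt hev
      have h3 : 3 ≤ m := hm3 hlt
      obtain ⟨w1, hw1⟩ := (heven (e - B)).1 (by rw [map_sub, hφe h3, hφB]; ring)
      obtain ⟨x1, hx1⟩ := hsolve w1
      have hx1e : ((u : ZMod n) - 1) * x1 = e - B := by rw [hx1, ← hw1]
      have hpx1 : aff u B x1 = x1 + e := by rw [aff_apply]; linear_combination hx1e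
      have hpx1e : aff u B (x1 + e) = x1 := by
        rw [aff_apply]; linear_combination hx1e + hkere + he2
      have hgsm0 : gs u m = 0 := by
        have hum1 : (u : ZMod n) ^ m = 1 := (hum m).2 dvd_rfl
        have h1 : ((u : ZMod n) - 1) * gs u m = 0 := by
          linear_combination gs_mul u m + hum1
        rcases (hker _).1 h1 with h0 | h0
        · exact h0
        · exfalso
          have hh := hφgs m
          rw [h0, hφe h3] at hh
          have hm0 : ((m : ℕ) : ZMod 2) = 0 :=
            (ZMod.natCast_eq_zero_iff m 2).2 (by rcases hev with ⟨s, hs⟩; omega)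
          rw [hm0] at hh
          exact (one_ne_zero : (1 : ZMod 2) ≠ 0) hh
      have hπm1 : ∀ x : ZMod n, (aff u B ^ m) x = x := by
        intro x
        rw [aff_pow_apply, (hum m).2 dvd_rfl, hgsm0]
        ring
      have hperx : ∀ x : ZMod n, x ≠ x1 → x ≠ x1 + e → ∀ t,
          ((aff u B ^ t) x = x ↔ m ∣ t) := by
        intro x hxp hxq t
        constructor
        · intro hxt
          by_contra hmd
          have ht2 : 2 ∣ t := by
            by_contra h2d
            exact hoddfix t h2d x hxt
          obtain ⟨t1, rfl⟩ := ht2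
          have hx1fix : (aff u B ^ (2 * t1)) x1 = x1 := by
            rw [pow_mul]
            refine pow_fix _ _ ?_ t1
            rw [pow_two, Perm.mul_apply, hpx1, hpx1e]
          rw [aff_pow_apply] at hxt hx1fix
          have hsub : ((u : ZMod n) ^ (2 * t1) - 1) * (x - x1) = 0 := by
            linear_combination hxt - hx1fix
          rcases hkert (2 * t1) hmd (x - x1) hsub with h0 | h0
          · exact hxp (by linear_combination h0)
          · exact hxq (by linear_combination h0)
        · rintro ⟨s, rfl⟩
          rw [pow_mul]
          exact pow_fix _ _ (hπm1 x) s
      have hp1 : aff u B x1 ≠ x1 := by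
        rw [hpx1]
        intro hh
        exact he0 (by linear_combination hh)
      have hp2 : aff u B (aff u B x1) = x1 := by rw [hpx1, hpx1e]
      obtain ⟨hdvd2, htype2⟩ := cycleType_two_uniform (aff u B) m hlt x1 hp1 hp2
        (fun x hxp hxq t => hperx x hxp (fun hh => hxq (hh.trans hpx1.symm)) t)
      rw [hcardn] at htype2
      have hcnt : (n - 2) / m = k := by
        rw [← hkm, Nat.mul_div_cancel k (by omega : 0 < m)]
      rw [hπj, htype2, hcnt]
    · -- m odd
      intro hmo
      have h3 : 3 ≤ m := by
        rcases hmo with ⟨s, hs⟩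
        omega
      obtain ⟨w1, hw1⟩ := (heven (e - B)).1 (by rw [map_sub, hφe h3, hφB]; ring)
      obtain ⟨x1, hx1⟩ := hsolve w1
      have hx1e : ((u : ZMod n) - 1) * x1 = e - B := by rw [hx1, ← hw1]
      have hpx1 : aff u B x1 = x1 + e := by rw [aff_apply]; linear_combination hx1e
      have hpx1e : aff u B (x1 + e) = x1 := by
        rw [aff_apply]; linear_combination hx1e + hkere + he2
      obtain ⟨h1', hh1'⟩ := (heven (B - 1)).1 (by rw [map_sub, hφB, _root_.map_one]; ring)
      have heB : e * B = e := by linear_combination e * hh1' + h1' * he2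
      have hgsme : gs u m = e := by
        have hum1 : (u : ZMod n) ^ m = 1 := (hum m).2 dvd_rfl
        have h1 : ((u : ZMod n) - 1) * gs u m = 0 := by
          linear_combination gs_mul u m + hum1
        rcases (hker _).1 h1 with h0 | h0
        · exfalso
          have hh := hφgs m
          rw [h0, _root_.map_zero] at hh
          obtain ⟨s, hs⟩ := hmo
          rw [hs] at hh
          push_cast at hh
          rw [h20] at hh
          exact (one_ne_zero : (1 : ZMod 2) ≠ 0) (by linear_combination -hh)
        · exact h0
      have hπme : ∀ x : ZMod n, (aff u B ^ m) x = x + e := by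
        intro x
        rw [aff_pow_apply, (hum m).2 dvd_rfl, hgsme]
        linear_combination heB
      have hπ2m1 : ∀ x : ZMod n, (aff u B ^ (2 * m)) x = x := by
        intro x
        rw [two_mul, pow_add, Perm.mul_apply, hπme, hπme]
        linear_combination he2
      have hcop : Nat.Coprime 2 m := by
        exact hmo.coprime_two_left
      have hperx : ∀ x : ZMod n, x ≠ x1 → x ≠ x1 + e → ∀ t,
          ((aff u B ^ t) x = x ↔ 2 * m ∣ t) := by
        intro x hxp hxq t
        constructor
        · intro hxt
          by_contra hmd
          have ht2 : 2 ∣ t := by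
            by_contra h2d
            exact hoddfix t h2d x hxt
          have hmdm : ¬ (m ∣ t) := by
            intro hmm
            exact hmd (hcop.mul_dvd_of_dvd_of_dvd ht2 hmm)
          obtain ⟨t1, rfl⟩ := ht2
          have hx1fix : (aff u B ^ (2 * t1)) x1 = x1 := by
            rw [pow_mul]
            refine pow_fix _ _ ?_ t1
            rw [pow_two, Perm.mul_apply, hpx1, hpx1e]
          rw [aff_pow_apply] at hxt hx1fix
          have hsub : ((u : ZMod n) ^ (2 * t1) - 1) * (x - x1) = 0 := by
            linear_combination hxt - hx1fix
          rcases hkert (2 * t1) hmdm (x - x1) hsub with h0 | h0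
          · exact hxp (by linear_combination h0)
          · exact hxq (by linear_combination h0)
        · rintro ⟨s, rfl⟩
          rw [pow_mul]
          exact pow_fix _ _ (hπ2m1 x) s
      have hp1 : aff u B x1 ≠ x1 := by
        rw [hpx1]
        intro hh
        exact he0 (by linear_combination hh)
      have hp2 : aff u B (aff u B x1) = x1 := by rw [hpx1, hpx1e]
      obtain ⟨hdvd2, htype2⟩ := cycleType_two_uniform (aff u B) (2 * m) (by omega) x1 hp1 hp2
        (fun x hxp hxq t => hperx x hxp (fun hh => hxq (hh.trans hpx1.symm)) t)
      rw [hcardn] at hdvd2 htype2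
      have hcnt : (n - 2) / (2 * m) = k / 2 := by
        obtain ⟨c, hc⟩ := hdvd2
        have hkc : k * m = 2 * m * c := by omega
        have hk2 : k = 2 * c := by
          have := Nat.eq_of_mul_eq_mul_right (show 0 < m by omega)
            (show k * m = (2 * c) * m by rw [hkc]; ring)
          exact this
        rw [hc, Nat.mul_div_cancel_left c (by omega : 0 < 2 * m)]
        omega
      rw [hπj, htype2, hcnt]
  refine ⟨part1, ?_, ?_, ?_, ?_⟩
  · intro hj hm2
    obtain ⟨ℓ, hℓ2, hℓn, htyp⟩ := (hoddstuff hj).1 hm2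
    refine ⟨ℓ, hℓn, ?_⟩
    rw [Multiset.filter_eq_self.2 (fun a ha => by
      rw [Multiset.eq_of_mem_replicate ha]; exact hℓ2)]
    exact htyp
  · intro hj hlt hev
    exact (hoddstuff hj).2.1 hlt hev
  · intro hj hmo
    exact (hoddstuff hj).2.2 hmo
  · intro H hH hj h hh hic
    obtain ⟨-, -, -, -, -, hav1, hav2, hav3⟩ := hH
    have hct : h.cycleType = (cyc n ^ j * τ).cycleType := (isConj_iff_cycleType_eq.1 hic).symm
    rcases eq_or_lt_of_le hm with hm2 | hlt
    · obtain ⟨ℓ, hℓ2, hℓn, htyp⟩ := (hoddstuff hj).1 hm2.symm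
      exact hav1 ℓ hℓn hℓ2 h hh (by rw [hct, htyp])
    · rcases Nat.even_or_odd m with hev | hmo
      · exact hav2 h hh (by rw [hct, (hoddstuff hj).2.1 hlt hev])
      · exact hav3 hmo h hh (by rw [hct, (hoddstuff hj).2.2 hmo])
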